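/- Let H be a C³ function of (x,y,t) on an open set of ℝ³ and let X(p,y,t) be a C² function on an open set V ⊆ ℝ³ such that H_x(X(p,y,t),y,t) = p and H_{xx}(X(p,y,t),y,t) ≠ 0 for all (p,y,t) ∈ V. Define the Legendre transform G(p,y,t) = H(X(p,y,t),y,t) − p·X(p,y,t). If H satisfies the wave equation H_{xt} − H_{yy} = 0, then G satisfies the G-equation G_{yp}² − G_{yy} G_{pp} − G_{pt} = 0 on V. -/

import Mathlib

/-- Partial derivative of `f : ℝ³ → ℝ` in direction `v`, as a function. -/
noncomputable def pd (v : ℝ × ℝ × ℝ) (f : ℝ × ℝ × ℝ → ℝ) : ℝ × ℝ × ℝ → ℝ :=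
  fun q => fderiv ℝ f q v

/-- Derivative in the first coordinate (named `x` for `H(x,y,t)`, `p` for `G(p,y,t)`). -/
noncomputable def px : (ℝ × ℝ × ℝ → ℝ) → ℝ × ℝ × ℝ → ℝ := pd (1, 0, 0)
/-- ∂/∂y. -/
noncomputable def py : (ℝ × ℝ × ℝ → ℝ) → ℝ × ℝ × ℝ → ℝ := pd (0, 1, 0)
/-- ∂/∂t. -/
noncomputable def pt : (ℝ × ℝ × ℝ → ℝ) → ℝ × ℝ × ℝ → ℝ := pd (0, 0, 1)

lemma pd_congr {f g : ℝ × ℝ × ℝ → ℝ} {s : Set (ℝ × ℝ × ℝ)} (hs : IsOpen s)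
    (h : ∀ x ∈ s, f x = g x) {q : ℝ × ℝ × ℝ} (hq : q ∈ s) (v : ℝ × ℝ × ℝ) :
    pd v f q = pd v g q := by
  unfold pd
  rw [Filter.EventuallyEq.fderiv_eq (Filter.eventuallyEq_of_mem (hs.mem_nhds hq) h)]

lemma hasFDerivAt_pd {f : ℝ × ℝ × ℝ → ℝ} {z : ℝ × ℝ × ℝ} (hf : ContDiffAt ℝ 2 f z)
    (w : ℝ × ℝ × ℝ) :
    HasFDerivAt (pd w f)
      ((ContinuousLinearMap.apply ℝ ℝ w).comp (fderiv ℝ (fderiv ℝ f) z)) z := by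
  have h1 : ContDiffAt ℝ 1 (fderiv ℝ f) z := hf.fderiv_right (by norm_num)
  have h2 : DifferentiableAt ℝ (fderiv ℝ f) z := h1.differentiableAt one_ne_zero
  exact (ContinuousLinearMap.apply ℝ ℝ w).hasFDerivAt.comp z h2.hasFDerivAt

lemma pd_pd_eq {f : ℝ × ℝ × ℝ → ℝ} {z : ℝ × ℝ × ℝ} (hf : ContDiffAt ℝ 2 f z)
    (v w : ℝ × ℝ × ℝ) :
    pd v (pd w f) z = fderiv ℝ (fderiv ℝ f) z v w := by
  have := (hasFDerivAt_pd hf w).fderiv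
  show (fderiv ℝ (pd w f) z) v = _
  rw [this]; rfl

/-- If `H(x,y,t)` is C³ on an open set `O`, `X(p,y,t)` is C² on an open set `V` with
`H_x(X(p,y,t),y,t) = p` and `H_{xx}(X(p,y,t),y,t) ≠ 0` on `V`, and `H` satisfies the
wave equation `H_{xt} - H_{yy} = 0`, then the Legendre transform
`G(p,y,t) = H(X(p,y,t),y,t) - p·X(p,y,t)` satisfies
`G_{yp}² - G_{yy} G_{pp} - G_{pt} = 0` on `V`. -/
theorem stmt5 (O V : Set (ℝ × ℝ × ℝ)) (hO : IsOpen O) (hV : IsOpen V)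
    (H X : ℝ × ℝ × ℝ → ℝ) (hH : ContDiffOn ℝ 3 H O) (hX : ContDiffOn ℝ 2 X V)
    (hmap : ∀ q ∈ V, (X q, q.2.1, q.2.2) ∈ O)
    (hleg : ∀ q ∈ V, px H (X q, q.2.1, q.2.2) = q.1)
    (hxx : ∀ q ∈ V, px (px H) (X q, q.2.1, q.2.2) ≠ 0)
    (hwave : ∀ z ∈ O, pt (px H) z - py (py H) z = 0) :
    let G : ℝ × ℝ × ℝ → ℝ := fun q => H (X q, q.2.1, q.2.2) - q.1 * X q
    ∀ q ∈ V, (px (py G) q) ^ 2 - py (py G) q * px (px G) q - pt (px G) q = 0 := by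
  intro G q hq
  have hXd : ∀ r ∈ V, DifferentiableAt ℝ X r := fun r hr =>
    (hX.contDiffAt (hV.mem_nhds hr)).differentiableAt (by norm_num)
  have hHc : ∀ r ∈ V, ContDiffAt ℝ 3 H (X r, r.2.1, r.2.2) := fun r hr =>
    hH.contDiffAt (hO.mem_nhds (hmap r hr))
  -- derivative of the map φ r = (X r, r.2.1, r.2.2)
  have hφd : ∀ r ∈ V, HasFDerivAt (fun s : ℝ × ℝ × ℝ => (X s, s.2.1, s.2.2))
      ((fderiv ℝ X r).prod (ContinuousLinearMap.snd ℝ ℝ (ℝ × ℝ))) r := fun r hr =>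
    HasFDerivAt.prodMk (hXd r hr).hasFDerivAt (ContinuousLinearMap.snd ℝ ℝ (ℝ × ℝ)).hasFDerivAt
  set L1 : (ℝ × ℝ × ℝ) →L[ℝ] ℝ := ContinuousLinearMap.fst ℝ ℝ (ℝ × ℝ) with hL1
  -- derivative of G on V
  have hGd : ∀ r ∈ V, HasFDerivAt G
      ((fderiv ℝ H (X r, r.2.1, r.2.2)).comp
        ((fderiv ℝ X r).prod (ContinuousLinearMap.snd ℝ ℝ (ℝ × ℝ)))
        - (r.1 • fderiv ℝ X r + X r • L1)) r := by
    intro r hr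
    have h1 : HasFDerivAt (fun s : ℝ × ℝ × ℝ => H (X s, s.2.1, s.2.2))
        ((fderiv ℝ H (X r, r.2.1, r.2.2)).comp
          ((fderiv ℝ X r).prod (ContinuousLinearMap.snd ℝ ℝ (ℝ × ℝ)))) r :=
      (((hHc r hr).differentiableAt (by norm_num)).hasFDerivAt).comp r (hφd r hr)
    have h2 : HasFDerivAt (fun s : ℝ × ℝ × ℝ => s.1 * X s)
        (r.1 • fderiv ℝ X r + X r • L1) r :=
      L1.hasFDerivAt.mul (hXd r hr).hasFDerivAt
    exact h1.sub h2
  -- smul decompositions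
  have dec1 : ∀ a : ℝ, ((a, 0, 0) : ℝ × ℝ × ℝ) = a • ((1:ℝ), (0:ℝ), (0:ℝ)) := by
    intro a; simp
  have dec2 : ∀ a : ℝ, ((a, 1, 0) : ℝ × ℝ × ℝ)
      = a • ((1:ℝ), (0:ℝ), (0:ℝ)) + ((0:ℝ), (1:ℝ), (0:ℝ)) := by
    intro a; simp
  have dec3 : ∀ a : ℝ, ((a, 0, 1) : ℝ × ℝ × ℝ)
      = a • ((1:ℝ), (0:ℝ), (0:ℝ)) + ((0:ℝ), (0:ℝ), (1:ℝ)) := by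
    intro a; simp
  -- px G = -X on V
  have hpxG : ∀ r ∈ V, px G r = -X r := by
    intro r hr
    have hf := (hGd r hr).fderiv
    show fderiv ℝ G r (1, 0, 0) = -X r
    rw [hf]
    have hv : ((fderiv ℝ X r).prod (ContinuousLinearMap.snd ℝ ℝ (ℝ × ℝ))) (1, 0, 0)
        = ((fderiv ℝ X r (1, 0, 0), 0, 0) : ℝ × ℝ × ℝ) := rfl
    simp only [ContinuousLinearMap.sub_apply, ContinuousLinearMap.comp_apply,
      ContinuousLinearMap.add_apply, ContinuousLinearMap.smul_apply, smul_eq_mul, hv]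
    rw [dec1, map_smul]
    have := hleg r hr
    simp only [px, pd] at this
    rw [this]
    simp [hL1]
    ring
  -- py G = (py H) ∘ φ on V
  have hpyG : ∀ r ∈ V, py G r = pd (0, 1, 0) H (X r, r.2.1, r.2.2) := by
    intro r hr
    have hf := (hGd r hr).fderiv
    show fderiv ℝ G r (0, 1, 0) = _
    rw [hf]
    have hv : ((fderiv ℝ X r).prod (ContinuousLinearMap.snd ℝ ℝ (ℝ × ℝ))) (0, 1, 0)
        = ((fderiv ℝ X r (0, 1, 0), 1, 0) : ℝ × ℝ × ℝ) := rfl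
    simp only [ContinuousLinearMap.sub_apply, ContinuousLinearMap.comp_apply,
      ContinuousLinearMap.add_apply, ContinuousLinearMap.smul_apply, smul_eq_mul, hv]
    rw [dec2, map_add, map_smul]
    have := hleg r hr
    simp only [px, pd] at this
    rw [this]
    simp [hL1, pd]
    ring
  -- now work at the point q
  have hH2 : ContDiffAt ℝ 2 H (X q, q.2.1, q.2.2) := (hHc q hq).of_le (by norm_num)
  set E := fderiv ℝ (fderiv ℝ H) (X q, q.2.1, q.2.2) with hE
  set a := fderiv ℝ X q (1, 0, 0) with ha
  set b := fderiv ℝ X q (0, 1, 0) with hb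
  set c := fderiv ℝ X q (0, 0, 1) with hc
  set A := E (1, 0, 0) (1, 0, 0) with hA
  set B := E (1, 0, 0) (0, 1, 0) with hB
  set C := E (0, 1, 0) (0, 1, 0) with hC
  set D := E (0, 0, 1) (1, 0, 0) with hD
  have hsym := hH2.isSymmSndFDerivAt (by simp [minSmoothness_of_isRCLikeNormedField])
  -- composite derivatives of (pd w H) ∘ φ at q
  have hDcomp : ∀ w : ℝ × ℝ × ℝ,
      HasFDerivAt (fun r : ℝ × ℝ × ℝ => pd w H (X r, r.2.1, r.2.2))
        (((ContinuousLinearMap.apply ℝ ℝ w).comp E).comp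
          ((fderiv ℝ X q).prod (ContinuousLinearMap.snd ℝ ℝ (ℝ × ℝ)))) q := fun w =>
    by have := (hasFDerivAt_pd hH2 w).comp q (hφd q hq); exact this
  -- differentiate the Legendre identity
  have hlegd : fderiv ℝ (fun r : ℝ × ℝ × ℝ => pd (1,0,0) H (X r, r.2.1, r.2.2)) q = L1 := by
    have heq : ∀ r ∈ V, (fun r : ℝ × ℝ × ℝ => pd (1,0,0) H (X r, r.2.1, r.2.2)) r
        = (fun r : ℝ × ℝ × ℝ => r.1) r := fun r hr => hleg r hr
    rw [Filter.EventuallyEq.fderiv_eq (Filter.eventuallyEq_of_mem (hV.mem_nhds hq) heq)]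
    exact L1.fderiv
  have hlegd' : ∀ v : ℝ × ℝ × ℝ, E (fderiv ℝ X q v, v.2.1, v.2.2) (1, 0, 0) = v.1 := by
    intro v
    have h1 := (hDcomp (1,0,0)).fderiv
    rw [hlegd] at h1
    have := congrArg (fun (T : (ℝ × ℝ × ℝ) →L[ℝ] ℝ) => T v) h1.symm
    simpa [hL1] using this
  have e1 : a * A = 1 := by
    have := hlegd' (1, 0, 0)
    rw [show ((fderiv ℝ X q (1,0,0), ((1:ℝ),(0:ℝ),(0:ℝ)).2.1, ((1:ℝ),(0:ℝ),(0:ℝ)).2.2) : ℝ×ℝ×ℝ)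
      = ((a, 0, 0) : ℝ×ℝ×ℝ) from rfl, dec1, map_smul] at this
    simpa [hA, mul_comm] using this
  have e2 : b * A + B = 0 := by
    have := hlegd' (0, 1, 0)
    rw [show ((fderiv ℝ X q (0,1,0), ((0:ℝ),(1:ℝ),(0:ℝ)).2.1, ((0:ℝ),(1:ℝ),(0:ℝ)).2.2) : ℝ×ℝ×ℝ)
      = ((b, 1, 0) : ℝ×ℝ×ℝ) from rfl, dec2, map_add, map_smul] at this
    have hs : E (0,1,0) (1,0,0) = B := hsym (0,1,0) (1,0,0)
    simp only [ContinuousLinearMap.add_apply, ContinuousLinearMap.smul_apply,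
      smul_eq_mul, hs] at this
    linarith [this]
  have e3 : c * A + D = 0 := by
    have := hlegd' (0, 0, 1)
    rw [show ((fderiv ℝ X q (0,0,1), ((0:ℝ),(0:ℝ),(1:ℝ)).2.1, ((0:ℝ),(0:ℝ),(1:ℝ)).2.2) : ℝ×ℝ×ℝ)
      = ((c, 0, 1) : ℝ×ℝ×ℝ) from rfl, dec3, map_add, map_smul] at this
    simp only [ContinuousLinearMap.add_apply, ContinuousLinearMap.smul_apply,
      smul_eq_mul] at this
    linarith [this]
  -- wave equation gives D = C
  have hDC : D = C := by
    have hw := hwave _ (hmap q hq)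
    rw [show pt (px H) = pd (0,0,1) (pd (1,0,0) H) from rfl,
      show py (py H) = pd (0,1,0) (pd (0,1,0) H) from rfl,
      pd_pd_eq hH2, pd_pd_eq hH2] at hw
    linarith [hw]
  -- A ≠ 0
  have hAne : A ≠ 0 := by
    have := hxx q hq
    rwa [show px (px H) = pd (1,0,0) (pd (1,0,0) H) from rfl, pd_pd_eq hH2] at this
  -- second derivatives of G at q
  have g1 : px (px G) q = -a := by
    rw [show px (px G) q = pd (1,0,0) (px G) q from rfl,
      pd_congr hV hpxG hq (1,0,0)]
    show fderiv ℝ (fun r => -X r) q (1,0,0) = -a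
    rw [fderiv_fun_neg]
    simp [ha]
  have g2 : pt (px G) q = -c := by
    rw [show pt (px G) q = pd (0,0,1) (px G) q from rfl,
      pd_congr hV hpxG hq (0,0,1)]
    show fderiv ℝ (fun r => -X r) q (0,0,1) = -c
    rw [fderiv_fun_neg]
    simp [hc]
  have g3 : px (py G) q = a * B := by
    rw [show px (py G) q = pd (1,0,0) (py G) q from rfl,
      pd_congr hV hpyG hq (1,0,0)]
    show fderiv ℝ (fun r : ℝ × ℝ × ℝ => pd (0,1,0) H (X r, r.2.1, r.2.2)) q (1,0,0) = a * B
    rw [(hDcomp (0,1,0)).fderiv]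
    show E ((fderiv ℝ X q (1,0,0), 0, 0) : ℝ×ℝ×ℝ) (0,1,0) = a * B
    rw [show ((fderiv ℝ X q (1,0,0), (0:ℝ), (0:ℝ)) : ℝ×ℝ×ℝ) = ((a,0,0) : ℝ×ℝ×ℝ) from rfl,
      dec1, map_smul]
    simp [hB, mul_comm]
  have g4 : py (py G) q = b * B + C := by
    rw [show py (py G) q = pd (0,1,0) (py G) q from rfl,
      pd_congr hV hpyG hq (0,1,0)]
    show fderiv ℝ (fun r : ℝ × ℝ × ℝ => pd (0,1,0) H (X r, r.2.1, r.2.2)) q (0,1,0) = b * B + C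
    rw [(hDcomp (0,1,0)).fderiv]
    show E ((fderiv ℝ X q (0,1,0), 1, 0) : ℝ×ℝ×ℝ) (0,1,0) = b * B + C
    rw [show ((fderiv ℝ X q (0,1,0), (1:ℝ), (0:ℝ)) : ℝ×ℝ×ℝ) = ((b,1,0) : ℝ×ℝ×ℝ) from rfl,
      dec2, map_add, map_smul]
    have hs : E (0,1,0) (1,0,0) = B := hsym (0,1,0) (1,0,0)
    simp [hB, hC, mul_comm]
  rw [g1, g2, g3, g4]
  -- algebra
  have hav : a = 1 / A := by rw [eq_div_iff hAne]; exact e1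
  have hbv : b = -B / A := by rw [eq_div_iff hAne]; linarith
  have hcv : c = -C / A := by rw [eq_div_iff hAne]; rw [hDC] at e3; linarith
  rw [hav, hbv, hcv]
  field_simp
  ring
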